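/- For every SF₁-expression e and every nonempty set A ⊆ Σ, the set of partial derivatives δ(e, A) is contained in the reach set ρ(e); moreover, if e' ∈ ρ(e) then δ(e', A) ⊆ ρ(e). -/
import Mathlib


/-- Letters of synchronous strings: nonempty subsets of the alphabet `σ`. -/
def Letter (σ : Type*) := {A : Set σ // A.Nonempty}

instance {σ : Type*} : Union (Letter σ) :=
  ⟨fun x y => ⟨x.1 ∪ y.1, x.2.mono Set.subset_union_left⟩⟩

/-- Semilattice terms over the alphabet `σ`. -/
inductive SL (σ : Type*)
  | gen (a : σ)
  | prod (e f : SL σ)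

/-- Interpretation of a semilattice term as a letter. -/
def SL.sem {σ : Type*} : SL σ → Letter σ
  | .gen a => ⟨{a}, Set.singleton_nonempty a⟩
  | .prod e f => e.sem ∪ f.sem

/-- SF₁-expressions over `σ`. -/
inductive Exp (σ : Type*)
  | zero
  | one
  | atom (a : SL σ)
  | add (e f : Exp σ)
  | mul (e f : Exp σ)
  | sprod (e f : Exp σ)
  | star (e : Exp σ)
  | h (e : Exp σ)

/-- The termination map `o`: `true` iff the expression can immediately terminate. -/
def termMap {σ : Type*} : Exp σ → Bool
  | .zero => false
  | .one => true
  | .atom _ => false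
  | .add e f => termMap e || termMap f
  | .mul e f => termMap e && termMap f
  | .sprod e f => termMap e && termMap f
  | .star _ => true
  | .h e => termMap e

open Classical in
/-- The partial-derivative (continuation) map `δ : Exp × P_n(Σ) → Pow(Exp)`. -/
noncomputable def pderiv {σ : Type*} : Exp σ → Letter σ → Set (Exp σ)
  | .zero, _ => ∅
  | .one, _ => ∅
  | .h _, _ => ∅
  | .atom a, A => if A = a.sem then {Exp.one} else ∅
  | .add e f, A => pderiv e A ∪ pderiv f A
  | .mul e f, A =>
      {x | ∃ e' ∈ pderiv e A, x = e'.mul f} ∪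
      (if termMap e then pderiv f A else ∅)
  | .star e, A => {x | ∃ e' ∈ pderiv e A, x = e'.mul e.star}
  | .sprod e f, A =>
      (if termMap f then pderiv e A else ∅) ∪
      (if termMap e then pderiv f A else ∅) ∪
      {x | ∃ B₁ B₂ : Letter σ, B₁ ∪ B₂ = A ∧
            ∃ e' ∈ pderiv e B₁, ∃ f' ∈ pderiv f B₂, x = e'.sprod f'}

/-- The reach function `ρ`. -/
def reach {σ : Type*} : Exp σ → Set (Exp σ)
  | .zero => ∅
  | .one => {Exp.one}
  | .atom a => {Exp.one, Exp.atom a}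
  | .add e f => reach e ∪ reach f
  | .mul e f => {x | ∃ e' ∈ reach e, x = e'.mul f} ∪ reach f
  | .star e => {Exp.one} ∪ {x | ∃ e' ∈ reach e, x = e'.mul e.star}
  | .sprod e f =>
      {x | ∃ e' ∈ reach e, ∃ f' ∈ reach f, x = e'.sprod f'} ∪ reach e ∪ reach f
  | .h _ => {Exp.one}

lemma reach_trans {σ : Type*} (e : Exp σ) :
    ∀ e' ∈ reach e, reach e' ⊆ reach e := by
  induction e with
  | zero => intro e' h; simp [reach] at h
  | one => intro e' h; simp [reach] at h; subst h; simp [reach]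
  | atom a =>
      intro e' h
      simp [reach] at h
      rcases h with h | h <;> subst h <;> simp [reach]
  | add e f ihe ihf =>
      intro e' h
      simp only [reach] at h ⊢
      rcases h with h | h
      · exact (ihe e' h).trans Set.subset_union_left
      · exact (ihf e' h).trans Set.subset_union_right
  | mul e f ihe ihf =>
      intro e' h
      simp only [reach, Set.mem_union, Set.mem_setOf_eq] at h
      rcases h with ⟨e'', he'', rfl⟩ | h
      · intro x hx
        simp only [reach, Set.mem_union, Set.mem_setOf_eq] at hx ⊢
        rcases hx with ⟨y, hy, rfl⟩ | hx
        · exact Or.inl ⟨y, ihe e'' he'' hy, rfl⟩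
        · exact Or.inr hx
      · exact (ihf e' h).trans Set.subset_union_right
  | sprod e f ihe ihf =>
      intro e' h
      simp only [reach, Set.mem_union, Set.mem_setOf_eq] at h
      rcases h with (⟨a, ha, b, hb, rfl⟩ | h) | h
      · intro x hx
        simp only [reach, Set.mem_union, Set.mem_setOf_eq] at hx ⊢
        rcases hx with (⟨a', ha', b', hb', rfl⟩ | hx) | hx
        · exact Or.inl (Or.inl ⟨a', ihe a ha ha', b', ihf b hb hb', rfl⟩)
        · exact Or.inl (Or.inr (ihe a ha hx))
        · exact Or.inr (ihf b hb hx)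
      · exact (ihe e' h).trans (Set.subset_union_right.trans Set.subset_union_left)
      · exact (ihf e' h).trans Set.subset_union_right
  | star e ihe =>
      intro e' h
      simp only [reach, Set.mem_union, Set.mem_setOf_eq, Set.mem_singleton_iff] at h
      rcases h with rfl | ⟨e'', he'', rfl⟩
      · intro x hx; simp [reach] at hx; subst hx; simp [reach]
      · intro x hx
        simp only [reach, Set.mem_union, Set.mem_setOf_eq] at hx ⊢
        rcases hx with ⟨y, hy, rfl⟩ | hx
        · exact Or.inr ⟨y, ihe e'' he'' hy, rfl⟩
        · exact hx
  | h e ihe =>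
      intro e' h
      simp [reach] at h; subst h
      intro x hx; simp [reach] at hx; subst hx; simp [reach]

lemma pderiv_subset {σ : Type*} (e : Exp σ) (A : Letter σ) :
    pderiv e A ⊆ reach e := by
  induction e generalizing A with
  | zero => simp [pderiv]
  | one => simp [pderiv]
  | atom a =>
      intro x hx
      simp only [pderiv] at hx
      split at hx
      · simp at hx; subst hx; simp [reach]
      · simp at hx
  | add e f ihe ihf =>
      intro x hx
      simp only [pderiv, Set.mem_union] at hx
      rcases hx with hx | hx
      · exact Set.subset_union_left (ihe A hx)
      · exact Set.subset_union_right (ihf A hx)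
  | mul e f ihe ihf =>
      intro x hx
      simp only [pderiv, Set.mem_union, Set.mem_setOf_eq] at hx
      rcases hx with ⟨e', he', rfl⟩ | hx
      · exact Or.inl ⟨e', ihe A he', rfl⟩
      · split at hx
        · exact Or.inr (ihf A hx)
        · simp at hx
  | sprod e f ihe ihf =>
      intro x hx
      simp only [pderiv, Set.mem_union, Set.mem_setOf_eq] at hx
      rcases hx with (hx | hx) | ⟨B₁, B₂, _, e', he', f', hf', rfl⟩
      · split at hx
        · exact Or.inl (Or.inr (ihe A hx))
        · simp at hx
      · split at hx
        · exact Or.inr (ihf A hx)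
        · simp at hx
      · exact Or.inl (Or.inl ⟨e', ihe B₁ he', f', ihf B₂ hf', rfl⟩)
  | star e ihe =>
      intro x hx
      simp only [pderiv, Set.mem_setOf_eq] at hx
      rcases hx with ⟨e', he', rfl⟩
      exact Or.inr ⟨e', ihe A he', rfl⟩
  | h e ihe => simp [pderiv]

/-- Partial derivatives are contained in the reach set, and the reach set is
closed under taking partial derivatives. -/
theorem deriv_subset_reach {σ : Type*} (e : Exp σ) (A : Letter σ) :
    pderiv e A ⊆ reach e ∧ ∀ e' ∈ reach e, pderiv e' A ⊆ reach e := by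
  exact ⟨pderiv_subset e A,
    fun e' he' => (pderiv_subset e' A).trans (reach_trans e e' he')⟩
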